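/- Let Ω be a compact subset of ℝ^d equipped with a probability measure μ, and let W ⊂ C(Ω) be a class of real continuous functions such that ‖f‖_∞ ≤ M for all f ∈ W, where M > 0 is a constant. Assume that the entropy numbers of W in the uniform norm satisfy ε_n(W) ≤ n^{-r} (log(n+1))^b for all n ∈ ℕ, where r ∈ (0,1/2) and b ≥ 0. Then there is a constant C(M,r,b) > 0 such that er_m(W, L_2) ≤ C(M,r,b) m^{-r} (log(m+1))^b for all m ∈ ℕ. -/

import Mathlib

open MeasureTheory Real

/-- The uniform covering property: there exist `2^n` centers belonging to `W`
whose closed `ε`-balls in the uniform norm cover `W`. -/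
def UnifCovers {Ω : Type*} (W : Set (Ω → ℝ)) (n : ℕ) (ε : ℝ) : Prop :=
  ∃ g : Fin (2 ^ n) → (Ω → ℝ), (∀ j, g j ∈ W) ∧
    ∀ f ∈ W, ∃ j, ∀ x, |f x - g j x| ≤ ε

/-- Entropy numbers of `W` in the uniform norm. -/
noncomputable def entropyNum {Ω : Type*} (W : Set (Ω → ℝ)) (n : ℕ) : ℝ :=
  sInf {ε : ℝ | 0 < ε ∧ UnifCovers W n ε}

/-- The sampling discretization error `er_m(W, L_2)` of the square norm. -/
noncomputable def erL2 {Ω : Type*} [MeasurableSpace Ω] (μ : Measure Ω)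
    (W : Set (Ω → ℝ)) (m : ℕ) : ℝ :=
  ⨅ ξ : Fin m → Ω, ⨆ f : W,
    |(∫ x, (f : Ω → ℝ) x ^ 2 ∂μ) - (1 / (m : ℝ)) * ∑ j, (f : Ω → ℝ) (ξ j) ^ 2|

open scoped ENNReal
open ProbabilityTheory

lemma exp_le_one_add_add_sq {x : ℝ} (hx : |x| ≤ 1) : Real.exp x ≤ 1 + x + x ^ 2 := by
  have h := Real.exp_bound hx (n := 2) (by norm_num)
  have h2 : ∑ m ∈ Finset.range 2, x ^ m / m.factorial = 1 + x := by
    simp [Finset.sum_range_succ]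
  rw [h2] at h
  have h3 : |x| ^ 2 = x ^ 2 := by rw [sq_abs]
  have h4 : Real.exp x - (1 + x) ≤ |x| ^ 2 * ((2 : ℕ).succ / ((2:ℕ).factorial * 2)) :=
    (abs_le.mp h).2
  have : ((2:ℕ).succ : ℝ) / ((2:ℕ).factorial * 2) = 3 / 4 := by norm_num [Nat.factorial]
  rw [this, h3] at h4
  nlinarith [sq_nonneg x]

lemma integrable_of_bdd {α : Type*} [MeasurableSpace α] {μ : Measure α} [IsFiniteMeasure μ]
    {g : α → ℝ} (hg : Measurable g) {C : ℝ} (h : ∀ x, |g x| ≤ C) : Integrable g μ :=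
  ⟨hg.aestronglyMeasurable, HasFiniteIntegral.of_bounded (ae_of_all μ h)⟩


lemma chernoff {α : Type*} [MeasurableSpace α] (μ : Measure α) [IsProbabilityMeasure μ]
    (m : ℕ) (hm : 0 < m) (h : α → ℝ) (hmeas : Measurable h)
    {A : ℝ} (hA : 0 < A) (hbd : ∀ x, |h x - ∫ y, h y ∂μ| ≤ A)
    {s : ℝ} (hs : 0 < s) (hs2 : s ≤ 2 * A) :
    Measure.pi (fun _ : Fin m => μ)
      {ξ | (m : ℝ) * s ≤ (∑ j, h (ξ j)) - m * ∫ y, h y ∂μ}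
      ≤ ENNReal.ofReal (Real.exp (-(m * s ^ 2) / (4 * A ^ 2))) := by
  letI : MeasureSpace α := ⟨μ⟩
  set c : ℝ := ∫ y, h y ∂μ with hc
  set Y : α → ℝ := fun x => h x - c with hY
  have hYmeas : Measurable Y := hmeas.sub measurable_const
  have hYbd : ∀ x, |Y x| ≤ A := hbd
  have hYint : Integrable Y μ := integrable_of_bdd hYmeas hYbd
  have hYzero : ∫ x, Y x ∂μ = 0 := by
    rw [hY]
    rw [integral_sub (integrable_of_bdd hmeas (C := A + |c|)
      (fun x => by have := hbd x; have := abs_sub_abs_le_abs_sub (h x) c; nlinarith [abs_nonneg (h x - c)]))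
      (integrable_const c)]
    simp [hc]
  set t : ℝ := s / (2 * A ^ 2) with ht
  have htpos : 0 < t := by positivity
  have htA : t * A ≤ 1 := by
    rw [ht]; rw [div_mul_eq_mul_div, div_le_one (by positivity)]
    nlinarith
  -- per-coordinate mgf bound
  have hptwise : ∀ x, Real.exp (t * Y x) ≤ 1 + t * Y x + t ^ 2 * A ^ 2 := by
    intro x
    have h1 : |t * Y x| ≤ 1 := by
      rw [abs_mul, abs_of_pos htpos]
      calc t * |Y x| ≤ t * A := by
            exact mul_le_mul_of_nonneg_left (hYbd x) htpos.le
        _ ≤ 1 := htA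
    have := exp_le_one_add_add_sq h1
    have h2 : (t * Y x) ^ 2 ≤ t ^ 2 * A ^ 2 := by
      rw [mul_pow]
      have : Y x ^ 2 ≤ A ^ 2 := by
        have := hYbd x; nlinarith [abs_nonneg (Y x), sq_abs (Y x)]
      nlinarith [sq_nonneg t]
    linarith
  have hint_exp : Integrable (fun x => Real.exp (t * Y x)) μ := by
    apply integrable_of_bdd ((hYmeas.const_mul t).exp)
    intro x
    rw [abs_of_pos (Real.exp_pos _)]
    apply Real.exp_le_exp.mpr
    calc t * Y x ≤ |t * Y x| := le_abs_self _
      _ ≤ t * A := by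
          rw [abs_mul, abs_of_pos htpos]
          exact mul_le_mul_of_nonneg_left (hYbd x) htpos.le
  have hmgf1 : ∫ x, Real.exp (t * Y x) ∂μ ≤ Real.exp (t ^ 2 * A ^ 2) := by
    have h1 : ∫ x, Real.exp (t * Y x) ∂μ ≤ ∫ x, (1 + t * Y x + t ^ 2 * A ^ 2) ∂μ := by
      apply integral_mono hint_exp _ hptwise
      exact ((integrable_const 1).add (hYint.const_mul t)).add (integrable_const _)
    have h2 : ∫ x, (1 + t * Y x + t ^ 2 * A ^ 2) ∂μ = 1 + t ^ 2 * A ^ 2 := by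
      have heq : (fun x => 1 + t * Y x + t ^ 2 * A ^ 2)
          = fun x => t * Y x + (1 + t ^ 2 * A ^ 2) := by funext x; ring
      rw [heq, integral_add (hYint.const_mul t) (integrable_const _), integral_const_mul, hYzero]
      simp
    rw [h2] at h1
    calc ∫ x, Real.exp (t * Y x) ∂μ ≤ 1 + t ^ 2 * A ^ 2 := h1
      _ ≤ Real.exp (t ^ 2 * A ^ 2) := by linarith [Real.add_one_le_exp (t ^ 2 * A ^ 2)]
  -- the sum variable
  set X : (Fin m → α) → ℝ := fun ξ => ∑ j, Y (ξ j) with hX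
  have hXmeas : Measurable X := by
    apply Finset.measurable_sum
    intro j _
    exact hYmeas.comp (measurable_pi_apply j)
  have hXbd : ∀ ξ, |X ξ| ≤ m * A := by
    intro ξ
    calc |X ξ| ≤ ∑ j, |Y (ξ j)| := Finset.abs_sum_le_sum_abs _ _
      _ ≤ ∑ _j : Fin m, A := Finset.sum_le_sum (fun j _ => hYbd _)
      _ = m * A := by simp [mul_comm]
  haveI : IsProbabilityMeasure (volume : Measure (Fin m → α)) :=
    MeasureTheory.Measure.pi.instIsProbabilityMeasure (fun _ : Fin m => μ)
  have hXint : Integrable (fun ξ => Real.exp (t * X ξ)) (volume : Measure (Fin m → α)) := by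
    apply integrable_of_bdd ((hXmeas.const_mul t).exp)
    intro ξ
    rw [abs_of_pos (Real.exp_pos _)]
    apply Real.exp_le_exp.mpr
    calc t * X ξ ≤ |t * X ξ| := le_abs_self _
      _ ≤ t * (m * A) := by
          rw [abs_mul, abs_of_pos htpos]
          exact mul_le_mul_of_nonneg_left (hXbd ξ) htpos.le
  have hmgfX : mgf X volume t ≤ Real.exp (m * (t ^ 2 * A ^ 2)) := by
    have hprod : ∀ ξ : Fin m → α, Real.exp (t * X ξ) = ∏ j, Real.exp (t * Y (ξ j)) := by
      intro ξ
      rw [hX]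
      simp only [Finset.mul_sum]
      exact Real.exp_sum _ _
    have : mgf X volume t = (∫ x, Real.exp (t * Y x)) ^ m := by
      rw [mgf]
      simp_rw [hprod]
      rw [show (volume : Measure (Fin m → α)) = Measure.pi (fun _ => μ) from rfl,
        MeasureTheory.integral_fintype_prod_eq_pow (ι := Fin m) (fun x => Real.exp (t * Y x))]
      simp
      rfl
    rw [this]
    calc (∫ x, Real.exp (t * Y x)) ^ m ≤ (Real.exp (t ^ 2 * A ^ 2)) ^ m := by
          apply pow_le_pow_left₀ (integral_nonneg (fun x => (Real.exp_pos _).le)) _ m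
          exact hmgf1
      _ = Real.exp (m * (t ^ 2 * A ^ 2)) := by
          rw [← Real.exp_nat_mul]
  have hmark := measure_ge_le_exp_mul_mgf (X := X) (μ := volume) (t := t) ((m : ℝ) * s) htpos.le hXint
  have hfin : (volume : Measure (Fin m → α)) {ω | (m : ℝ) * s ≤ X ω} ≠ ⊤ := measure_ne_top _ _
  have key : ((volume : Measure (Fin m → α)) {ω | (m : ℝ) * s ≤ X ω}).toReal
      ≤ Real.exp (-(m * s ^ 2) / (4 * A ^ 2)) := by
    calc ((volume : Measure (Fin m → α)) {ω | (m : ℝ) * s ≤ X ω}).toReal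
        ≤ Real.exp (-t * (m * s)) * mgf X volume t := hmark
      _ ≤ Real.exp (-t * (m * s)) * Real.exp (m * (t ^ 2 * A ^ 2)) := by
          apply mul_le_mul_of_nonneg_left hmgfX (Real.exp_pos _).le
      _ = Real.exp (-t * (m * s) + m * (t ^ 2 * A ^ 2)) := by rw [← Real.exp_add]
      _ = Real.exp (-(m * s ^ 2) / (4 * A ^ 2)) := by
          congr 1
          rw [ht]
          field_simp
          ring
  have hset : {ξ : Fin m → α | (m : ℝ) * s ≤ (∑ j, h (ξ j)) - m * c}
      = {ω | (m : ℝ) * s ≤ X ω} := by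
    ext ξ
    simp only [Set.mem_setOf_eq, hX, hY]
    rw [Finset.sum_sub_distrib]
    simp
  have : Measure.pi (fun _ : Fin m => μ) = (volume : Measure (Fin m → α)) := by
    rfl
  rw [this, hset]
  exact (ENNReal.le_ofReal_iff_toReal_le hfin (Real.exp_pos _).le).mpr key

noncomputable def thr (c e : ℝ) (m : ℕ) : ℝ := min (2 * c * Real.sqrt (4 * e / m)) (2 * c)

lemma thr_le (c e : ℝ) (m : ℕ) : thr c e m ≤ 2 * c * Real.sqrt (4 * e / m) := min_le_left _ _

lemma bad_bound {α : Type*} [MeasurableSpace α] (μ : Measure α) [IsProbabilityMeasure μ]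
    (m : ℕ) (hm : 0 < m) (q : α → ℝ) (hq : Measurable q) {c : ℝ} (hc : 0 < c)
    (hqc : ∀ x, |q x| ≤ c) {e : ℝ} (he : 0 < e) :
    Measure.pi (fun _ : Fin m => μ)
      {ξ | (m : ℝ) * thr c e m < |(∑ j, q (ξ j)) - m * ∫ x, q x ∂μ|}
      ≤ ENNReal.ofReal (2 * Real.exp (-e)) := by
  set Pm := Measure.pi (fun _ : Fin m => μ) with hPm
  set c' : ℝ := ∫ x, q x ∂μ with hc'
  have hqint : Integrable q μ := integrable_of_bdd hq hqc
  have hIc : |c'| ≤ c := by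
    rw [hc', ← Real.norm_eq_abs]
    calc ‖∫ x, q x ∂μ‖ ≤ c * (μ Set.univ).toReal :=
      norm_integral_le_of_norm_le_const (ae_of_all μ (fun x => hqc x))
      _ = c := by simp
  have hcent : ∀ x, |q x - c'| ≤ 2 * c := by
    intro x
    calc |q x - c'| ≤ |q x| + |c'| := abs_sub _ _
      _ ≤ c + c := add_le_add (hqc x) hIc
      _ = 2 * c := by ring
  set t : ℝ := 2 * c * Real.sqrt (4 * e / m) with hts
  by_cases hcase : 2 * c ≤ t
  · -- threshold is 2c : the event is empty
    have hthr : thr c e m = 2 * c := min_eq_right hcase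
    have hempty : {ξ : Fin m → α | (m : ℝ) * thr c e m < |(∑ j, q (ξ j)) - m * c'|} = ∅ := by
      ext ξ
      simp only [Set.mem_setOf_eq, Set.mem_empty_iff_false, iff_false, not_lt, hthr]
      calc |(∑ j, q (ξ j)) - m * c'| = |∑ j : Fin m, (q (ξ j) - c')| := by
            rw [Finset.sum_sub_distrib]; simp
        _ ≤ ∑ j : Fin m, |q (ξ j) - c'| := Finset.abs_sum_le_sum_abs _ _
        _ ≤ ∑ _j : Fin m, 2 * c := Finset.sum_le_sum (fun j _ => hcent _)
        _ = m * (2 * c) := by simp [mul_comm]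
    rw [hempty]
    simp
  · push_neg at hcase
    have hthr : thr c e m = t := min_eq_left hcase.le
    have htpos : 0 < t := by
      have : (0:ℝ) < 4 * e / m := by positivity
      positivity
    have ht2 : t ≤ 2 * (2 * c) := by nlinarith
    have hexp : Real.exp (-(m * t ^ 2) / (4 * (2 * c) ^ 2)) = Real.exp (-e) := by
      congr 1
      rw [hts, mul_pow, Real.sq_sqrt (by positivity)]
      field_simp
    have hintneg : ∫ x, (-q) x ∂μ = -c' := by
      rw [hc']; simp [integral_neg]
    have hsub : {ξ : Fin m → α | (m : ℝ) * thr c e m < |(∑ j, q (ξ j)) - m * c'|}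
        ⊆ {ξ : Fin m → α | (m : ℝ) * t ≤ (∑ j, q (ξ j)) - m * ∫ x, q x ∂μ}
          ∪ {ξ : Fin m → α | (m : ℝ) * t ≤ (∑ j, (-q) (ξ j)) - m * ∫ x, (-q) x ∂μ} := by
      intro ξ hξ
      simp only [Set.mem_setOf_eq, hthr] at hξ
      rcases lt_abs.mp hξ with h | h
      · left; simp only [Set.mem_setOf_eq, ← hc']; linarith
      · right
        simp only [Set.mem_setOf_eq, Pi.neg_apply, Finset.sum_neg_distrib, integral_neg, ← hc']
        linarith
    have hA : (0:ℝ) < 2 * c := by positivity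
    have hb1 := chernoff μ m hm q hq hA (fun x => by rw [← hc']; exact hcent x) htpos ht2
    have hb2 := chernoff μ m hm (-q) hq.neg hA
      (fun x => by rw [hintneg, Pi.neg_apply]; rw [show -q x - -c' = -(q x - c') by ring, abs_neg]; exact hcent x)
      htpos ht2
    calc Pm {ξ : Fin m → α | (m : ℝ) * thr c e m < |(∑ j, q (ξ j)) - m * c'|}
        ≤ Pm ({ξ : Fin m → α | (m : ℝ) * t ≤ (∑ j, q (ξ j)) - m * ∫ x, q x ∂μ}
          ∪ {ξ : Fin m → α | (m : ℝ) * t ≤ (∑ j, (-q) (ξ j)) - m * ∫ x, (-q) x ∂μ}) :=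
          measure_mono hsub
      _ ≤ Pm {ξ : Fin m → α | (m : ℝ) * t ≤ (∑ j, q (ξ j)) - m * ∫ x, q x ∂μ}
          + Pm {ξ : Fin m → α | (m : ℝ) * t ≤ (∑ j, (-q) (ξ j)) - m * ∫ x, (-q) x ∂μ} :=
          measure_union_le _ _
      _ ≤ ENNReal.ofReal (Real.exp (-(m * t ^ 2) / (4 * (2*c) ^ 2)))
          + ENNReal.ofReal (Real.exp (-(m * t ^ 2) / (4 * (2*c) ^ 2))) := add_le_add hb1 hb2
      _ = ENNReal.ofReal (2 * Real.exp (-e)) := by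
          rw [hexp, ← ENNReal.ofReal_add (Real.exp_pos _).le (Real.exp_pos _).le]
          congr 1; ring

lemma covers_of_entropy {α : Type*} (W : Set (α → ℝ)) (hW : W.Nonempty)
    {M : ℝ} (hM : 0 < M) (hWM : ∀ f ∈ W, ∀ x, |f x| ≤ M)
    {n : ℕ} {Bn : ℝ} (hBn : 0 < Bn) (hE : entropyNum W n ≤ Bn) :
    ∃ g : Fin (2 ^ n) → (α → ℝ), (∀ j, g j ∈ W) ∧
      ∀ f ∈ W, ∃ j, ∀ x, |f x - g j x| ≤ 2 * Bn := by
  obtain ⟨f₀, hf₀⟩ := hW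
  have hmem : (2 * M) ∈ {ε : ℝ | 0 < ε ∧ UnifCovers W n ε} := by
    refine ⟨by positivity, fun _ => f₀, fun _ => hf₀, fun f hf => ?_⟩
    refine ⟨⟨0, pow_pos (by norm_num) n⟩, fun x => ?_⟩
    calc |f x - f₀ x| ≤ |f x| + |f₀ x| := abs_sub _ _
      _ ≤ M + M := add_le_add (hWM f hf x) (hWM f₀ hf₀ x)
      _ = 2 * M := by ring
  have hlt : entropyNum W n < 2 * Bn := lt_of_le_of_lt hE (by linarith)
  obtain ⟨ε, ⟨hεpos, g, hgW, hgcov⟩, hεlt⟩ :=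
    exists_lt_of_csInf_lt ⟨2 * M, hmem⟩ hlt
  exact ⟨g, hgW, fun f hf => by
    obtain ⟨j, hj⟩ := hgcov f hf
    exact ⟨j, fun x => (hj x).trans hεlt.le⟩⟩


/-- entropy bound -/
noncomputable def entB (r b : ℝ) (n : ℕ) : ℝ :=
  (n : ℝ) ^ (-r) * (Real.logb 2 ((n : ℝ) + 1)) ^ b

noncomputable def del (r b : ℝ) (k : ℕ) : ℝ := 2 * entB r b (2 ^ k)

noncomputable def cpair (M r b : ℝ) (k : ℕ) : ℝ := 2 * M * (del r b (k + 1) + del r b k)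

noncomputable def epair (k : ℕ) : ℝ := ((2 : ℝ) ^ (k + 2) + k + 4) * Real.log 2

noncomputable def uu0 (M : ℝ) (m : ℕ) : ℝ := thr (M ^ 2) (4 * Real.log 2) m

noncomputable def upair (M r b : ℝ) (m k : ℕ) : ℝ := thr (cpair M r b k) (epair k) m

noncomputable def EE (M r b : ℝ) (m : ℕ) : ℝ :=
  uu0 M m + (∑ k ∈ Finset.range (Nat.clog 2 m), upair M r b m k)
    + 4 * M * del r b (Nat.clog 2 m)

lemma entB_pos {r b : ℝ} {n : ℕ} (hn : 0 < n) : 0 < entB r b n := by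
  have h1 : (0:ℝ) < (n:ℝ) ^ (-r) := Real.rpow_pos_of_pos (by exact_mod_cast hn) _
  have h2 : (0:ℝ) < Real.logb 2 ((n:ℝ) + 1) := by
    apply Real.logb_pos (by norm_num)
    have : (1:ℝ) ≤ (n:ℝ) := by exact_mod_cast hn
    linarith
  exact mul_pos h1 (Real.rpow_pos_of_pos h2 _)

lemma del_pos {r b : ℝ} (k : ℕ) : 0 < del r b k :=
  mul_pos (by norm_num) (entB_pos (pow_pos (by norm_num) _))

lemma cpair_pos {M r b : ℝ} (hM : 0 < M) (k : ℕ) : 0 < cpair M r b k :=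
  mul_pos (by linarith) (add_pos (del_pos _) (del_pos _))

lemma epair_pos (k : ℕ) : 0 < epair k := by
  have : (0:ℝ) < (2:ℝ) ^ (k + 2) := by positivity
  have h4 : (0:ℝ) < Real.log 2 := Real.log_pos (by norm_num)
  have : (0:ℝ) < (2:ℝ) ^ (k + 2) + k + 4 := by positivity
  exact mul_pos this h4

lemma count_est (k : ℕ) :
    ((2 ^ 2 ^ (k + 1) * 2 ^ 2 ^ k : ℕ) : ℝ) * (2 * Real.exp (-epair k))
      ≤ (1 / 2 : ℝ) ^ (k + 3) := by
  have hc : (0:ℝ) < (2:ℝ) ^ ((2:ℝ) ^ (k + 2) + k + 4 : ℝ) := Real.rpow_pos_of_pos two_pos _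
  have hlog : Real.exp (-epair k) = ((2:ℝ) ^ ((2:ℝ) ^ (k + 2) + k + 4 : ℝ))⁻¹ := by
    rw [epair, ← Real.exp_log hc, ← Real.exp_neg]
    rw [Real.log_rpow two_pos]
  rw [hlog]
  push_cast
  have e1 : ((2:ℝ) ^ (2 ^ (k+1) : ℕ)) = (2:ℝ) ^ ((2 ^ (k+1) : ℕ) : ℝ) :=
    (Real.rpow_natCast 2 _).symm
  have e2 : ((2:ℝ) ^ (2 ^ k : ℕ)) = (2:ℝ) ^ ((2 ^ k : ℕ) : ℝ) :=
    (Real.rpow_natCast 2 _).symm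
  have e3 : ((1:ℝ)/2) ^ (k+3) = (2:ℝ) ^ (-((k:ℝ) + 3)) := by
    have h5 : ((1:ℝ)/2)^(k+3) = ((2:ℝ)^((k+3 : ℕ)))⁻¹ := by
      rw [div_pow]; simp
    rw [h5, ← Real.rpow_natCast 2 (k+3), ← Real.rpow_neg (by norm_num : (0:ℝ) ≤ 2)]
    congr 1
    push_cast
    ring
  have h4 : (2:ℝ) * ((2:ℝ) ^ ((2:ℝ) ^ (k + 2) + k + 4 : ℝ))⁻¹
      = (2:ℝ) ^ (1 - ((2:ℝ) ^ (k + 2) + k + 4) : ℝ) := by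
    rw [Real.rpow_sub two_pos, Real.rpow_one]
    rw [div_eq_mul_inv]
  rw [e1, e2, e3, h4, ← Real.rpow_add two_pos, ← Real.rpow_add two_pos]
  apply Real.rpow_le_rpow_of_exponent_le one_le_two
  push_cast
  have h1 : (2:ℝ) ^ (k+1) = 2 * 2 ^ k := by ring
  have h2 : (2:ℝ) ^ (k+2) = 4 * 2 ^ k := by ring
  have h3 : (0:ℝ) < 2 ^ k := by positivity
  nlinarith

lemma sum_halves (K : ℕ) : ∑ k ∈ Finset.range K, (1/2:ℝ)^(k+3) ≤ 1/4 := by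
  have h : ∑ k ∈ Finset.range K, (1/2:ℝ)^(k+3) = (1/8) * ∑ k ∈ Finset.range K, (1/2:ℝ)^k := by
    rw [Finset.mul_sum]; apply Finset.sum_congr rfl; intro k _; ring
  rw [h, geom_sum_eq (by norm_num : (1/2:ℝ) ≠ 1) K]
  have h5 : ((1/2:ℝ)^K - 1)/((1/2:ℝ) - 1) = 2*(1 - (1/2:ℝ)^K) := by
    field_simp
    ring
  rw [h5]
  have h3 : (0:ℝ) ≤ (1/2:ℝ)^K := by positivity
  have h4 : (1/2:ℝ)^K ≤ 1 := pow_le_one₀ (by norm_num) (by norm_num)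
  nlinarith


lemma core {α : Type*} [MeasurableSpace α] (μ : Measure α) [IsProbabilityMeasure μ]
    (W : Set (α → ℝ)) (hWmeas : ∀ f ∈ W, Measurable f) (hW : W.Nonempty)
    (M r b : ℝ) (hM : 0 < M) (hWM : ∀ f ∈ W, ∀ x, |f x| ≤ M)
    (hent : ∀ n : ℕ, 0 < n → entropyNum W n ≤ entB r b n)
    (m : ℕ) (hm : 0 < m) :
    ∃ ξ : Fin m → α, ∀ f ∈ W,
      |(∫ x, f x ^ 2 ∂μ) - (1 / (m : ℝ)) * ∑ j, f (ξ j) ^ 2| ≤ EE M r b m := by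
  classical
  set K := Nat.clog 2 m with hK
  -- covers at every scale
  have hcov : ∀ k : ℕ, ∃ g : Fin (2 ^ (2 ^ k)) → (α → ℝ), (∀ j, g j ∈ W) ∧
      ∀ f ∈ W, ∃ j, ∀ x, |f x - g j x| ≤ del r b k := by
    intro k
    exact covers_of_entropy W hW hM hWM (entB_pos (pow_pos two_pos k))
      (hent (2 ^ k) (pow_pos two_pos k))
  choose Φ hΦW hΦcov using hcov
  have hΦmeas : ∀ k i, Measurable (Φ k i) := fun k i => hWmeas _ (hΦW k i)
  have hΦbd : ∀ k i x, |Φ k i x| ≤ M := fun k i x => hWM _ (hΦW k i) x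
  set Pm := Measure.pi (fun _ : Fin m => μ) with hPm
  haveI : IsProbabilityMeasure Pm := MeasureTheory.Measure.pi.instIsProbabilityMeasure _
  -- bad sets
  set Bad0 : Fin (2 ^ (2 ^ 0)) → Set (Fin m → α) := fun i =>
    {ξ | (m : ℝ) * uu0 M m <
      |(∑ j', (fun x => Φ 0 i x ^ 2) (ξ j')) - m * ∫ x, (fun x => Φ 0 i x ^ 2) x ∂μ|} with hBad0
  set BadP : (k : ℕ) → Fin (2 ^ (2 ^ (k + 1))) → Fin (2 ^ (2 ^ k)) → Set (Fin m → α) :=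
    fun k i j =>
    {ξ | (∀ x, |Φ (k+1) i x - Φ k j x| ≤ del r b (k+1) + del r b k) ∧
      (m : ℝ) * upair M r b m k <
      |(∑ j', (fun x => Φ (k+1) i x ^ 2 - Φ k j x ^ 2) (ξ j'))
        - m * ∫ x, (fun x => Φ (k+1) i x ^ 2 - Φ k j x ^ 2) x ∂μ|} with hBadP
  have hBad0_bd : ∀ i, Pm (Bad0 i) ≤ ENNReal.ofReal (2 * Real.exp (-(4 * Real.log 2))) := by
    intro i
    have hq : Measurable fun x => Φ 0 i x ^ 2 := (hΦmeas 0 i).pow_const 2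
    have hqc : ∀ x, |Φ 0 i x ^ 2| ≤ M ^ 2 := by
      intro x
      rw [abs_pow]
      exact pow_le_pow_left₀ (abs_nonneg _) (hΦbd 0 i x) 2
    have he : (0:ℝ) < 4 * Real.log 2 := by positivity
    exact bad_bound μ m hm _ hq (by positivity) hqc he
  have hBadP_bd : ∀ k i j, Pm (BadP k i j) ≤ ENNReal.ofReal (2 * Real.exp (-epair k)) := by
    intro k i j
    by_cases hcond : ∀ x, |Φ (k+1) i x - Φ k j x| ≤ del r b (k+1) + del r b k
    · have hsub : BadP k i j ⊆
        {ξ | (m : ℝ) * thr (cpair M r b k) (epair k) m <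
          |(∑ j', (fun x => Φ (k+1) i x ^ 2 - Φ k j x ^ 2) (ξ j'))
            - m * ∫ x, (fun x => Φ (k+1) i x ^ 2 - Φ k j x ^ 2) x ∂μ|} := by
        intro ξ hξ; exact hξ.2
      refine le_trans (measure_mono hsub) ?_
      have hq : Measurable fun x => Φ (k+1) i x ^ 2 - Φ k j x ^ 2 :=
        ((hΦmeas _ i).pow_const 2).sub ((hΦmeas _ j).pow_const 2)
      have hqc : ∀ x, |Φ (k+1) i x ^ 2 - Φ k j x ^ 2| ≤ cpair M r b k := by
        intro x
        have h1 : Φ (k+1) i x ^ 2 - Φ k j x ^ 2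
            = (Φ (k+1) i x - Φ k j x) * (Φ (k+1) i x + Φ k j x) := by ring
        rw [h1, abs_mul]
        have h2 : |Φ (k+1) i x + Φ k j x| ≤ 2 * M := by
          calc |Φ (k+1) i x + Φ k j x| ≤ |Φ (k+1) i x| + |Φ k j x| := abs_add_le _ _
            _ ≤ M + M := add_le_add (hΦbd _ _ _) (hΦbd _ _ _)
            _ = 2 * M := by ring
        calc |Φ (k+1) i x - Φ k j x| * |Φ (k+1) i x + Φ k j x|
            ≤ (del r b (k+1) + del r b k) * (2 * M) := by
              apply mul_le_mul (hcond x) h2 (abs_nonneg _)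
              have := del_pos (r := r) (b := b) (k+1); have := del_pos (r := r) (b := b) k
              linarith
          _ = cpair M r b k := by rw [cpair]; ring
      exact bad_bound μ m hm _ hq (cpair_pos hM k) hqc (epair_pos k)
    · have : BadP k i j = ∅ := by
        ext ξ; simp only [hBadP, Set.mem_setOf_eq, Set.mem_empty_iff_false, iff_false]
        intro hmem; exact hcond hmem.1
      rw [this]; simp
  -- total bad measure
  set Bad : Set (Fin m → α) :=
    (⋃ i, Bad0 i) ∪ ⋃ k : Fin K, ⋃ i, ⋃ j, BadP (k : ℕ) i j with hBad
  have hbad0_tot : Pm (⋃ i, Bad0 i) ≤ ENNReal.ofReal (1/4 : ℝ) := by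
    calc Pm (⋃ i, Bad0 i) ≤ ∑' i, Pm (Bad0 i) := measure_iUnion_le _
      _ ≤ ∑' _i : Fin (2^(2^0)), ENNReal.ofReal (2 * Real.exp (-(4 * Real.log 2))) :=
          ENNReal.tsum_le_tsum hBad0_bd
      _ = (2^(2^0) : ℕ) • ENNReal.ofReal (2 * Real.exp (-(4 * Real.log 2))) := by
          rw [tsum_fintype]
          simp
      _ ≤ ENNReal.ofReal (1/4) := by
          rw [nsmul_eq_mul, ← ENNReal.ofReal_natCast, ← ENNReal.ofReal_mul (by positivity)]
          apply ENNReal.ofReal_le_ofReal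
          have hexp : Real.exp (-(4 * Real.log 2)) = 1/16 := by
            rw [Real.exp_neg]
            have h16 : Real.exp (4 * Real.log 2) = 16 := by
              rw [show (4:ℝ) * Real.log 2 = ((4:ℕ):ℝ) * Real.log 2 by norm_num,
                Real.exp_nat_mul, Real.exp_log two_pos]
              norm_num
            rw [h16]; norm_num
          rw [hexp]; norm_num
  have hbadP_tot : Pm (⋃ k : Fin K, ⋃ i, ⋃ j, BadP (k : ℕ) i j) ≤ ENNReal.ofReal (1/4 : ℝ) := by
    calc Pm (⋃ k : Fin K, ⋃ i, ⋃ j, BadP (k : ℕ) i j)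
        ≤ ∑' k : Fin K, Pm (⋃ i, ⋃ j, BadP (k : ℕ) i j) := measure_iUnion_le _
      _ ≤ ∑' k : Fin K, ENNReal.ofReal ((1/2:ℝ)^((k:ℕ)+3)) := by
          apply ENNReal.tsum_le_tsum
          intro k
          calc Pm (⋃ i, ⋃ j, BadP (k:ℕ) i j)
              ≤ ∑' i, Pm (⋃ j, BadP (k:ℕ) i j) := measure_iUnion_le _
            _ ≤ ∑' i, ∑' j, Pm (BadP (k:ℕ) i j) :=
                ENNReal.tsum_le_tsum (fun i => measure_iUnion_le _)
            _ ≤ ∑' _i : Fin (2^(2^((k:ℕ)+1))), ∑' _j : Fin (2^(2^(k:ℕ))),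
                  ENNReal.ofReal (2 * Real.exp (-epair k)) :=
                ENNReal.tsum_le_tsum (fun i => ENNReal.tsum_le_tsum (fun j => hBadP_bd _ i j))
            _ = ((2^(2^((k:ℕ)+1)) * 2^(2^(k:ℕ)) : ℕ)) • ENNReal.ofReal (2 * Real.exp (-epair k)) := by
                simp [tsum_fintype, mul_smul]
            _ ≤ ENNReal.ofReal ((1/2:ℝ)^((k:ℕ)+3)) := by
                rw [nsmul_eq_mul, ← ENNReal.ofReal_natCast, ← ENNReal.ofReal_mul (by positivity)]
                exact ENNReal.ofReal_le_ofReal (count_est k)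
      _ = ENNReal.ofReal (∑ k : Fin K, (1/2:ℝ)^((k:ℕ)+3)) := by
          rw [tsum_fintype, ← ENNReal.ofReal_sum_of_nonneg (fun k _ => by positivity)]
      _ ≤ ENNReal.ofReal (1/4 : ℝ) := by
          apply ENNReal.ofReal_le_ofReal
          rw [Fin.sum_univ_eq_sum_range (fun n => ((1:ℝ)/2)^(n+3)) K]
          exact sum_halves K
  have htotal : Pm Bad < 1 := by
    calc Pm Bad ≤ Pm (⋃ i, Bad0 i) + Pm (⋃ k : Fin K, ⋃ i, ⋃ j, BadP (k : ℕ) i j) :=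
          measure_union_le _ _
      _ ≤ ENNReal.ofReal (1/4) + ENNReal.ofReal (1/4) := add_le_add hbad0_tot hbadP_tot
      _ = ENNReal.ofReal (1/2) := by
          rw [← ENNReal.ofReal_add (by norm_num) (by norm_num)]; norm_num
      _ < 1 := by
          rw [show (1:ℝ≥0∞) = ENNReal.ofReal 1 by simp]
          exact ENNReal.ofReal_lt_ofReal_iff_of_nonneg (by norm_num) |>.mpr (by norm_num)
  -- good point exists
  have hgood : ∃ ξ : Fin m → α, ξ ∉ Bad := by
    by_contra hcon
    push_neg at hcon
    have : Set.univ ⊆ Bad := fun ξ _ => hcon ξ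
    have h1 : (1 : ℝ≥0∞) ≤ Pm Bad := by
      calc (1:ℝ≥0∞) = Pm Set.univ := (measure_univ).symm
        _ ≤ Pm Bad := measure_mono this
    exact absurd htotal (not_lt.mpr h1)
  obtain ⟨ξ, hξ⟩ := hgood
  have hnot0 : ∀ i, ξ ∉ Bad0 i := fun i hmem =>
    hξ (Set.mem_union_left _ (Set.mem_iUnion.mpr ⟨i, hmem⟩))
  have hnotP : ∀ (k : Fin K) i j, ξ ∉ BadP (k : ℕ) i j := fun k i j hmem =>
    hξ (Set.mem_union_right _ (Set.mem_iUnion.mpr ⟨k,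
      Set.mem_iUnion.mpr ⟨i, Set.mem_iUnion.mpr ⟨j, hmem⟩⟩⟩))
  refine ⟨ξ, fun f hf => ?_⟩
  have hq_int : ∀ g : α → ℝ, g ∈ W → Integrable (fun x => g x ^ 2) μ := fun g hg =>
    integrable_of_bdd ((hWmeas g hg).pow_const 2) (C := M ^ 2) (fun x => by
      rw [abs_pow]; exact pow_le_pow_left₀ (abs_nonneg _) (hWM g hg x) 2)
  choose jf hjf using fun k => hΦcov k f hf
  set T : ℕ → ℝ := fun k =>
    (∑ j', Φ k (jf k) (ξ j') ^ 2) - m * ∫ x, Φ k (jf k) x ^ 2 ∂μ with hT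
  have h0 : |T 0| ≤ m * uu0 M m := by
    have hn := hnot0 (jf 0)
    simp only [hBad0, Set.mem_setOf_eq, not_lt] at hn
    exact hn
  have hstep : ∀ k : ℕ, k < K → |T (k+1) - T k| ≤ m * upair M r b m k := by
    intro k hk
    have hn := hnotP ⟨k, hk⟩ (jf (k+1)) (jf k)
    simp only [hBadP, Set.mem_setOf_eq, not_and, not_lt] at hn
    have hcond : ∀ x, |Φ (k+1) (jf (k+1)) x - Φ k (jf k) x| ≤ del r b (k+1) + del r b k := by
      intro x
      calc |Φ (k+1) (jf (k+1)) x - Φ k (jf k) x|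
          ≤ |Φ (k+1) (jf (k+1)) x - f x| + |f x - Φ k (jf k) x| := abs_sub_le _ _ _
        _ ≤ del r b (k+1) + del r b k := by
            rw [abs_sub_comm]
            exact add_le_add (hjf (k+1) x) (hjf k x)
    have h2 := hn hcond
    have heq : T (k+1) - T k
        = (∑ j', (Φ (k+1) (jf (k+1)) (ξ j') ^ 2 - Φ k (jf k) (ξ j') ^ 2))
          - m * ∫ x, (Φ (k+1) (jf (k+1)) x ^ 2 - Φ k (jf k) x ^ 2) ∂μ := by
      rw [hT]
      simp only
      rw [Finset.sum_sub_distrib, integral_sub (hq_int _ (hΦW _ _)) (hq_int _ (hΦW _ _))]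
      ring
    rw [heq]
    exact h2
  have hptw : ∀ x, |f x ^ 2 - Φ K (jf K) x ^ 2| ≤ 2 * M * del r b K := by
    intro x
    have hfac : f x ^ 2 - Φ K (jf K) x ^ 2
        = (f x - Φ K (jf K) x) * (f x + Φ K (jf K) x) := by ring
    rw [hfac, abs_mul]
    have h2 : |f x + Φ K (jf K) x| ≤ 2 * M := by
      calc |f x + Φ K (jf K) x| ≤ |f x| + |Φ K (jf K) x| := abs_add_le _ _
        _ ≤ M + M := add_le_add (hWM f hf x) (hΦbd _ _ x)
        _ = 2 * M := by ring
    calc |f x - Φ K (jf K) x| * |f x + Φ K (jf K) x| ≤ del r b K * (2 * M) := by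
          apply mul_le_mul (hjf K x) h2 (abs_nonneg _) (del_pos K).le
      _ = 2 * M * del r b K := by ring
  have htail : |((∑ j', f (ξ j') ^ 2) - m * ∫ x, f x ^ 2 ∂μ) - T K|
      ≤ m * (4 * M * del r b K) := by
    have heq : ((∑ j', f (ξ j') ^ 2) - m * ∫ x, f x ^ 2 ∂μ) - T K
        = (∑ j', (f (ξ j') ^ 2 - Φ K (jf K) (ξ j') ^ 2))
          - m * ∫ x, (f x ^ 2 - Φ K (jf K) x ^ 2) ∂μ := by
      rw [hT]
      simp only
      rw [Finset.sum_sub_distrib, integral_sub (hq_int f hf) (hq_int _ (hΦW _ _))]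
      ring
    rw [heq]
    have hS : |∑ j', (f (ξ j') ^ 2 - Φ K (jf K) (ξ j') ^ 2)| ≤ m * (2 * M * del r b K) := by
      calc |∑ j', (f (ξ j') ^ 2 - Φ K (jf K) (ξ j') ^ 2)|
          ≤ ∑ j' : Fin m, |f (ξ j') ^ 2 - Φ K (jf K) (ξ j') ^ 2| := Finset.abs_sum_le_sum_abs _ _
        _ ≤ ∑ _j' : Fin m, 2 * M * del r b K := Finset.sum_le_sum (fun j' _ => hptw _)
        _ = m * (2 * M * del r b K) := by simp [mul_comm]
    have hI : |∫ x, (f x ^ 2 - Φ K (jf K) x ^ 2) ∂μ| ≤ 2 * M * del r b K := by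
      rw [← Real.norm_eq_abs]
      calc ‖∫ x, (f x ^ 2 - Φ K (jf K) x ^ 2) ∂μ‖
          ≤ (2 * M * del r b K) * (μ Set.univ).toReal :=
            norm_integral_le_of_norm_le_const (ae_of_all μ (fun x => hptw x))
        _ = 2 * M * del r b K := by simp
    calc |(∑ j', (f (ξ j') ^ 2 - Φ K (jf K) (ξ j') ^ 2))
          - m * ∫ x, (f x ^ 2 - Φ K (jf K) x ^ 2) ∂μ|
        ≤ |∑ j', (f (ξ j') ^ 2 - Φ K (jf K) (ξ j') ^ 2)|
          + (m:ℝ) * |∫ x, (f x ^ 2 - Φ K (jf K) x ^ 2) ∂μ| := by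
          have := abs_sub ((∑ j', (f (ξ j') ^ 2 - Φ K (jf K) (ξ j') ^ 2)))
            ((m:ℝ) * ∫ x, (f x ^ 2 - Φ K (jf K) x ^ 2) ∂μ)
          rw [abs_mul, Nat.abs_cast] at this
          exact this
      _ ≤ m * (2 * M * del r b K) + m * (2 * M * del r b K) := by
          have hm0 : (0:ℝ) ≤ m := Nat.cast_nonneg m
          exact add_le_add hS (mul_le_mul_of_nonneg_left hI hm0)
      _ = m * (4 * M * del r b K) := by ring
  have htel : |T K - T 0| ≤ ∑ k ∈ Finset.range K, (m * upair M r b m k) := by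
    rw [← Finset.sum_range_sub T K]
    calc |∑ k ∈ Finset.range K, (T (k+1) - T k)|
        ≤ ∑ k ∈ Finset.range K, |T (k+1) - T k| := Finset.abs_sum_le_sum_abs _ _
      _ ≤ ∑ k ∈ Finset.range K, (m * upair M r b m k) :=
          Finset.sum_le_sum (fun k hk => hstep k (Finset.mem_range.mp hk))
  have hbig : |(∑ j', f (ξ j') ^ 2) - m * ∫ x, f x ^ 2 ∂μ| ≤ m * EE M r b m := by
    have h1 : |(∑ j', f (ξ j') ^ 2) - m * ∫ x, f x ^ 2 ∂μ|
        ≤ |((∑ j', f (ξ j') ^ 2) - m * ∫ x, f x ^ 2 ∂μ) - T K| + |T K - T 0| + |T 0| := by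
      have := abs_sub_le ((∑ j', f (ξ j') ^ 2) - m * ∫ x, f x ^ 2 ∂μ) (T K) (T 0)
      have h2 := abs_sub_le ((∑ j', f (ξ j') ^ 2) - m * ∫ x, f x ^ 2 ∂μ) (T 0) 0
      simp only [sub_zero] at h2
      calc |(∑ j', f (ξ j') ^ 2) - m * ∫ x, f x ^ 2 ∂μ|
          ≤ |((∑ j', f (ξ j') ^ 2) - m * ∫ x, f x ^ 2 ∂μ) - T 0| + |T 0| := h2
        _ ≤ (|((∑ j', f (ξ j') ^ 2) - m * ∫ x, f x ^ 2 ∂μ) - T K| + |T K - T 0|) + |T 0| :=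
            add_le_add_left this _
    have hEE : EE M r b m = uu0 M m + (∑ k ∈ Finset.range K, upair M r b m k)
        + 4 * M * del r b K := by rw [EE, hK]
    rw [hEE]
    have hsum : ∑ k ∈ Finset.range K, ((m:ℝ) * upair M r b m k)
        = m * ∑ k ∈ Finset.range K, upair M r b m k := by rw [Finset.mul_sum]
    rw [hsum] at htel
    calc |(∑ j', f (ξ j') ^ 2) - m * ∫ x, f x ^ 2 ∂μ|
        ≤ |((∑ j', f (ξ j') ^ 2) - m * ∫ x, f x ^ 2 ∂μ) - T K| + |T K - T 0| + |T 0| := h1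
      _ ≤ m * (4 * M * del r b K) + m * (∑ k ∈ Finset.range K, upair M r b m k)
          + m * uu0 M m := add_le_add (add_le_add htail htel) h0
      _ = m * (uu0 M m + (∑ k ∈ Finset.range K, upair M r b m k) + 4 * M * del r b K) := by
          ring
  have hmR : (0:ℝ) < (m:ℝ) := by exact_mod_cast hm
  have hfinal : ∫ x, f x ^ 2 ∂μ - (1 / (m:ℝ)) * ∑ j, f (ξ j) ^ 2
      = -(1/(m:ℝ)) * ((∑ j', f (ξ j') ^ 2) - m * ∫ x, f x ^ 2 ∂μ) := by
    field_simp
    ring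
  rw [hfinal, abs_mul, abs_neg, abs_of_pos (by positivity : (0:ℝ) < 1/(m:ℝ))]
  calc (1/(m:ℝ)) * |(∑ j', f (ξ j') ^ 2) - m * ∫ x, f x ^ 2 ∂μ|
      ≤ (1/(m:ℝ)) * (m * EE M r b m) := by
        apply mul_le_mul_of_nonneg_left hbig (by positivity)
    _ = EE M r b m := by field_simp

lemma logb2_mono {x y : ℝ} (hx : 0 < x) (h : x ≤ y) : Real.logb 2 x ≤ Real.logb 2 y :=
  Real.logb_le_logb_of_le (by norm_num) hx h

lemma logb2_rpow (y : ℝ) : Real.logb 2 ((2:ℝ) ^ y) = y :=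
  Real.logb_rpow (by norm_num) (by norm_num)

lemma logb2_two : Real.logb 2 (2:ℝ) = 1 := by
  rw [Real.logb, div_self (ne_of_gt (Real.log_pos (by norm_num)))]

lemma logb2_natpow_add_one_le (k : ℕ) :
    Real.logb 2 ((2:ℝ) ^ k + 1) ≤ (k : ℝ) + 1 := by
  have h1 : (2:ℝ) ^ k + 1 ≤ (2:ℝ) ^ ((k : ℝ) + 1) := by
    have h2 : (2:ℝ) ^ ((k:ℝ) + 1) = 2 ^ k * 2 := by
      rw [Real.rpow_add (by norm_num), Real.rpow_one, Real.rpow_natCast]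
    have h3 : (1:ℝ) ≤ 2 ^ k := one_le_pow₀ (by norm_num)
    linarith
  calc Real.logb 2 ((2:ℝ) ^ k + 1) ≤ Real.logb 2 ((2:ℝ) ^ ((k:ℝ) + 1)) :=
        logb2_mono (by positivity) h1
    _ = (k : ℝ) + 1 := logb2_rpow _

lemma logb2_natpow_nonneg (k : ℕ) : 0 ≤ Real.logb 2 ((2:ℝ) ^ k + 1) := by
  have h0 : Real.logb 2 1 = 0 := Real.logb_one
  rw [← h0]
  apply logb2_mono (by norm_num)
  have : (1:ℝ) ≤ 2 ^ k := one_le_pow₀ (by norm_num)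
  linarith

lemma entB_pow2_le {r b : ℝ} (hb : 0 ≤ b) (k : ℕ) :
    entB r b (2 ^ k) ≤ ((2:ℝ) ^ k) ^ (-r) * ((k:ℝ) + 1) ^ b := by
  rw [entB]
  have hc : ((2 ^ k : ℕ) : ℝ) = (2:ℝ) ^ k := by push_cast; ring
  rw [hc]
  apply mul_le_mul_of_nonneg_left _ (Real.rpow_nonneg (by positivity) _)
  exact Real.rpow_le_rpow (logb2_natpow_nonneg k) (logb2_natpow_add_one_le k) hb

lemma base_anti {r : ℝ} (hr0 : 0 < r) {x y : ℝ} (hx : 0 < x) (h : x ≤ y) :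
    y ^ (-r) ≤ x ^ (-r) := by
  rw [Real.rpow_neg (by linarith), Real.rpow_neg hx.le]
  have h1 : x ^ r ≤ y ^ r := Real.rpow_le_rpow hx.le h hr0.le
  have h2 : 0 < x ^ r := Real.rpow_pos_of_pos hx r
  exact inv_anti₀ h2 h1


lemma EE_le (M r b : ℝ) (hM : 0 < M) (hr0 : 0 < r) (hr : r < 1/2) (hb : 0 ≤ b) :
    ∃ C : ℝ, 0 < C ∧ ∀ m : ℕ, 0 < m →
      EE M r b m ≤ C * (m:ℝ) ^ (-r) * (Real.logb 2 ((m:ℝ) + 1)) ^ b := by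
  classical
  set γ : ℝ := 1/2 - r with hγ
  have hγ0 : 0 < γ := by rw [hγ]; linarith
  set x : ℝ := (2:ℝ) ^ γ with hx
  have hx1 : 1 < x := Real.one_lt_rpow_iff_of_pos (by norm_num) |>.mpr (by norm_num; exact hγ0)
  refine ⟨8*M^2 + 192*M/(x-1)*(3:ℝ)^b + 8*M*(3:ℝ)^b, by
    have h3b : (0:ℝ) < (3:ℝ)^b := Real.rpow_pos_of_pos (by norm_num) b
    have hx1' : (0:ℝ) < x - 1 := by linarith
    positivity, ?_⟩
  intro m hm
  set K := Nat.clog 2 m with hK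
  have hm1 : (1:ℝ) ≤ (m:ℝ) := by exact_mod_cast hm
  have hmpos : (0:ℝ) < (m:ℝ) := by linarith
  set L : ℝ := Real.logb 2 ((m:ℝ) + 1) with hL
  have hL1 : 1 ≤ L := by
    have h := logb2_mono (by norm_num : (0:ℝ) < 2) (by linarith : (2:ℝ) ≤ (m:ℝ)+1)
    rw [logb2_two] at h
    exact h
  have hLb : 1 ≤ L ^ b := Real.one_le_rpow hL1 hb
  have hLbpos : 0 < L ^ b := by linarith
  have hmr : (0:ℝ) < (m:ℝ) ^ (-r) := Real.rpow_pos_of_pos hmpos _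
  -- 2^K bounds
  have hm2K : (m:ℝ) ≤ (2:ℝ) ^ K := by
    have := Nat.le_pow_clog (by norm_num : 1 < 2) m
    exact_mod_cast this
  have h2Km : (2:ℝ) ^ K ≤ 2 * m := by
    rcases Nat.lt_or_ge m 2 with h2 | h2
    · interval_cases m
      rw [hK, Nat.clog_one_right]
      norm_num
    · have hKpos : 1 ≤ K := by
        rw [hK]
        have := Nat.clog_pos (by norm_num : 1 < 2) h2
        omega
      have h3 : 2 ^ (K - 1) < m := Nat.pow_pred_clog_lt_self (by norm_num) (by omega)
      have h4 : (2:ℕ) ^ K = 2 * 2 ^ (K - 1) := by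
        rw [← pow_succ']
        congr 1
        omega
      have h5 : (2:ℕ) ^ K ≤ 2 * m := by omega
      exact_mod_cast h5
  -- K + 1 ≤ 3 L
  have hKL : (K:ℝ) + 1 ≤ 3 * L := by
    have h1 : (K:ℝ) = Real.logb 2 ((2:ℝ) ^ (K:ℝ)) := (logb2_rpow _).symm
    have h2 : Real.logb 2 ((2:ℝ) ^ (K:ℝ)) ≤ Real.logb 2 (2 * ((m:ℝ) + 1)) := by
      apply logb2_mono (Real.rpow_pos_of_pos (by norm_num) _)
      rw [Real.rpow_natCast]
      linarith
    have h3 : Real.logb 2 (2 * ((m:ℝ) + 1)) = 1 + L := by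
      rw [hL, Real.logb_mul (by norm_num) (by positivity), logb2_two]
    have h4 : (K:ℝ) ≤ 1 + L := by rw [h1]; rw [h3] at h2; exact h2
    linarith
  have hK1b : ((K:ℝ) + 1) ^ b ≤ 3 ^ b * L ^ b := by
    rw [← Real.mul_rpow (by norm_num) (by linarith)]
    apply Real.rpow_le_rpow (by positivity) hKL hb
  -- inverse sqrt m
  have hsqmpos : 0 < Real.sqrt (m:ℝ) := Real.sqrt_pos.mpr hmpos
  have hinv : (Real.sqrt (m:ℝ))⁻¹ = (m:ℝ) ^ (-(1:ℝ)/2) := by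
    rw [Real.sqrt_eq_rpow, ← Real.rpow_neg hmpos.le]
    norm_num
  -- (i) uu0 bound
  have hmr12 : (m:ℝ) ^ (-(1:ℝ)/2) ≤ (m:ℝ) ^ (-r) :=
    Real.rpow_le_rpow_of_exponent_le hm1 (by linarith)
  have hu0 : uu0 M m ≤ 8 * M^2 * (m:ℝ) ^ (-r) := by
    have h1 : uu0 M m ≤ 2 * M^2 * Real.sqrt (4 * (4 * Real.log 2) / m) := thr_le _ _ _
    have hlog2 : Real.log 2 ≤ 1 := by
      have := Real.log_le_sub_one_of_pos (by norm_num : (0:ℝ) < 2)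
      linarith
    have h2 : Real.sqrt (4 * (4 * Real.log 2) / m) ≤ Real.sqrt (16 / m) := by
      apply Real.sqrt_le_sqrt
      apply (div_le_div_iff_of_pos_right hmpos).mpr
      linarith [Real.log_pos (by norm_num : (1:ℝ) < 2)]
    have h3 : Real.sqrt (16 / (m:ℝ)) = 4 * (Real.sqrt (m:ℝ))⁻¹ := by
      rw [show (16:ℝ)/(m:ℝ) = 16 * (m:ℝ)⁻¹ by ring, Real.sqrt_mul (by norm_num),
        Real.sqrt_inv, show (16:ℝ) = 4^2 by norm_num, Real.sqrt_sq (by norm_num)]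
    have h4 : uu0 M m ≤ 8 * M^2 * (m:ℝ) ^ (-(1:ℝ)/2) := by
      calc uu0 M m ≤ 2 * M^2 * Real.sqrt (4 * (4 * Real.log 2) / m) := h1
        _ ≤ 2 * M^2 * (4 * (Real.sqrt (m:ℝ))⁻¹) := by
            rw [← h3]
            exact mul_le_mul_of_nonneg_left h2 (by positivity)
        _ = 8 * M^2 * (Real.sqrt (m:ℝ))⁻¹ := by ring
        _ = 8 * M^2 * (m:ℝ) ^ (-(1:ℝ)/2) := by rw [hinv]
    calc uu0 M m ≤ 8 * M^2 * (m:ℝ) ^ (-(1:ℝ)/2) := h4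
      _ ≤ 8 * M^2 * (m:ℝ) ^ (-r) := mul_le_mul_of_nonneg_left hmr12 (by positivity)
  -- (ii) del bounds
  have hdel : ∀ k : ℕ, del r b k ≤ 2 * ((2:ℝ)^k) ^ (-r) * ((k:ℝ)+1) ^ b := by
    intro k
    rw [del]
    have h := entB_pow2_le (r := r) hb k
    calc 2 * entB r b (2^k) ≤ 2 * (((2:ℝ)^k) ^ (-r) * ((k:ℝ)+1) ^ b) :=
        mul_le_mul_of_nonneg_left h (by norm_num)
      _ = 2 * ((2:ℝ)^k) ^ (-r) * ((k:ℝ)+1) ^ b := by ring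
  have hcp : ∀ k : ℕ, cpair M r b k ≤ 8 * M * ((2:ℝ)^k) ^ (-r) * ((k:ℝ)+2) ^ b := by
    intro k
    have hp1 : (0:ℝ) < (2:ℝ)^k := by positivity
    have hbase : ((2:ℝ)^(k+1)) ^ (-r) ≤ ((2:ℝ)^k) ^ (-r) := by
      apply base_anti hr0 hp1
      have h2 : (2:ℝ)^(k+1) = 2 * 2^k := by ring
      nlinarith
    have hexp1 : ((k:ℝ)+1) ^ b ≤ ((k:ℝ)+2) ^ b :=
      Real.rpow_le_rpow (by positivity) (by linarith) hb
    have hd1 : del r b (k+1) ≤ 2 * ((2:ℝ)^k) ^ (-r) * ((k:ℝ)+2) ^ b := by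
      have h := hdel (k+1)
      have hc : (((k+1:ℕ)):ℝ) + 1 = (k:ℝ) + 2 := by push_cast; ring
      rw [hc] at h
      calc del r b (k+1) ≤ 2 * ((2:ℝ)^(k+1)) ^ (-r) * ((k:ℝ)+2) ^ b := by
            calc del r b (k+1) ≤ 2 * ((2:ℝ)^(k+1)) ^ (-r) * (((k+1:ℕ):ℝ)+1) ^ b := hdel (k+1)
              _ = 2 * ((2:ℝ)^(k+1)) ^ (-r) * ((k:ℝ)+2) ^ b := by rw [hc]
        _ ≤ 2 * ((2:ℝ)^k) ^ (-r) * ((k:ℝ)+2) ^ b := by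
            apply mul_le_mul_of_nonneg_right _ (Real.rpow_nonneg (by positivity) _)
            linarith [hbase]
    have hd2 : del r b k ≤ 2 * ((2:ℝ)^k) ^ (-r) * ((k:ℝ)+2) ^ b := by
      calc del r b k ≤ 2 * ((2:ℝ)^k) ^ (-r) * ((k:ℝ)+1) ^ b := hdel k
        _ ≤ 2 * ((2:ℝ)^k) ^ (-r) * ((k:ℝ)+2) ^ b := by
            apply mul_le_mul_of_nonneg_left hexp1
            positivity
    rw [cpair]
    calc 2 * M * (del r b (k+1) + del r b k)
        ≤ 2 * M * (2 * ((2:ℝ)^k) ^ (-r) * ((k:ℝ)+2) ^ b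
            + 2 * ((2:ℝ)^k) ^ (-r) * ((k:ℝ)+2) ^ b) := by
          apply mul_le_mul_of_nonneg_left (add_le_add hd1 hd2) (by positivity)
      _ = 8 * M * ((2:ℝ)^k) ^ (-r) * ((k:ℝ)+2) ^ b := by ring
  -- epair bound
  have hep : ∀ k : ℕ, epair k ≤ (2:ℝ)^(k+3) := by
    intro k
    have hlog2 : Real.log 2 ≤ 1 := by
      have := Real.log_le_sub_one_of_pos (by norm_num : (0:ℝ) < 2)
      linarith
    have hk4 : (k:ℝ) + 4 ≤ (2:ℝ)^(k+2) := by
      have hn : k + 4 ≤ 2^(k+2) := by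
        have h1 : k < 2^k := Nat.lt_two_pow_self
        have h2 : (2:ℕ)^(k+2) = 4 * 2^k := by ring
        omega
      calc (k:ℝ) + 4 = ((k + 4 : ℕ) : ℝ) := by push_cast; ring
        _ ≤ ((2^(k+2) : ℕ) : ℝ) := by exact_mod_cast hn
        _ = (2:ℝ)^(k+2) := by push_cast; ring
    have hpos : (0:ℝ) < (2:ℝ)^(k+2) + k + 4 := by positivity
    calc epair k ≤ ((2:ℝ)^(k+2) + k + 4) * 1 := by
          rw [epair]
          apply mul_le_mul_of_nonneg_left hlog2 hpos.le
      _ = (2:ℝ)^(k+2) + k + 4 := by ring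
      _ ≤ (2:ℝ)^(k+2) + (2:ℝ)^(k+2) := by linarith
      _ = (2:ℝ)^(k+3) := by ring
  -- upair bound
  have hup : ∀ k : ℕ, upair M r b m k
      ≤ 96 * M * ((k:ℝ)+2) ^ b * x^k * (Real.sqrt (m:ℝ))⁻¹ := by
    intro k
    have hp1 : (0:ℝ) < (2:ℝ)^k := by positivity
    have h1 : upair M r b m k ≤ 2 * cpair M r b k * Real.sqrt (4 * epair k / m) := thr_le _ _ _
    have h2 : Real.sqrt (4 * epair k / m) ≤ 6 * Real.sqrt ((2:ℝ)^k) * (Real.sqrt (m:ℝ))⁻¹ := by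
      have ha : 4 * epair k / (m:ℝ) ≤ 36 * (2:ℝ)^k / m := by
        apply (div_le_div_iff_of_pos_right hmpos).mpr
        have h5 := hep k
        have h3 : (2:ℝ)^(k+3) = 8 * 2^k := by ring
        nlinarith
      calc Real.sqrt (4 * epair k / m) ≤ Real.sqrt (36 * (2:ℝ)^k / m) := Real.sqrt_le_sqrt ha
        _ = 6 * Real.sqrt ((2:ℝ)^k) * (Real.sqrt (m:ℝ))⁻¹ := by
            rw [show (36:ℝ) * (2:ℝ)^k / m = 36 * ((2:ℝ)^k * (m:ℝ)⁻¹) by ring,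
              Real.sqrt_mul (by norm_num), Real.sqrt_mul (by positivity), Real.sqrt_inv,
              show (36:ℝ) = 6^2 by norm_num, Real.sqrt_sq (by norm_num)]
            ring
    have hcpk := hcp k
    have h4 : upair M r b m k
        ≤ 2 * (8 * M * ((2:ℝ)^k) ^ (-r) * ((k:ℝ)+2) ^ b)
          * (6 * Real.sqrt ((2:ℝ)^k) * (Real.sqrt (m:ℝ))⁻¹) := by
      calc upair M r b m k ≤ 2 * cpair M r b k * Real.sqrt (4 * epair k / m) := h1
        _ ≤ 2 * (8 * M * ((2:ℝ)^k) ^ (-r) * ((k:ℝ)+2) ^ b) * Real.sqrt (4 * epair k / m) := by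
            apply mul_le_mul_of_nonneg_right _ (Real.sqrt_nonneg _)
            linarith
        _ ≤ 2 * (8 * M * ((2:ℝ)^k) ^ (-r) * ((k:ℝ)+2) ^ b)
              * (6 * Real.sqrt ((2:ℝ)^k) * (Real.sqrt (m:ℝ))⁻¹) := by
            apply mul_le_mul_of_nonneg_left h2
            positivity
    have hxk : ((2:ℝ)^k) ^ (-r) * Real.sqrt ((2:ℝ)^k) = x^k := by
      rw [Real.sqrt_eq_rpow, ← Real.rpow_natCast (2:ℝ) k, ← Real.rpow_mul (by norm_num),
        ← Real.rpow_mul (by norm_num), ← Real.rpow_add (by norm_num : (0:ℝ) < 2), hx,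
        ← Real.rpow_natCast ((2:ℝ)^γ) k, ← Real.rpow_mul (by norm_num)]
      congr 1
      rw [hγ]
      ring
    calc upair M r b m k
        ≤ 2 * (8 * M * ((2:ℝ)^k) ^ (-r) * ((k:ℝ)+2) ^ b)
          * (6 * Real.sqrt ((2:ℝ)^k) * (Real.sqrt (m:ℝ))⁻¹) := h4
      _ = 96 * M * ((k:ℝ)+2) ^ b * (((2:ℝ)^k) ^ (-r) * Real.sqrt ((2:ℝ)^k))
          * (Real.sqrt (m:ℝ))⁻¹ := by ring
      _ = 96 * M * ((k:ℝ)+2) ^ b * x^k * (Real.sqrt (m:ℝ))⁻¹ := by rw [hxk]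
  -- sum bound
  have hx1' : (0:ℝ) < x - 1 := by linarith
  have hsum : ∑ k ∈ Finset.range K, upair M r b m k
      ≤ 192 * M / (x-1) * (3:ℝ)^b * ((m:ℝ)^(-r) * L^b) := by
    have hterm : ∀ k ∈ Finset.range K, upair M r b m k
        ≤ 96 * M * ((K:ℝ)+1) ^ b * (Real.sqrt (m:ℝ))⁻¹ * x^k := by
      intro k hk
      have hkK : k < K := Finset.mem_range.mp hk
      have h1 : ((k:ℝ)+2) ^ b ≤ ((K:ℝ)+1) ^ b := by
        apply Real.rpow_le_rpow (by positivity) _ hb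
        have : (k:ℝ) + 1 ≤ (K:ℝ) := by exact_mod_cast hkK
        linarith
      calc upair M r b m k ≤ 96 * M * ((k:ℝ)+2) ^ b * x^k * (Real.sqrt (m:ℝ))⁻¹ := hup k
        _ = (96 * M * (x^k * (Real.sqrt (m:ℝ))⁻¹)) * ((k:ℝ)+2) ^ b := by ring
        _ ≤ (96 * M * (x^k * (Real.sqrt (m:ℝ))⁻¹)) * ((K:ℝ)+1) ^ b := by
            apply mul_le_mul_of_nonneg_left h1
            positivity
        _ = 96 * M * ((K:ℝ)+1) ^ b * (Real.sqrt (m:ℝ))⁻¹ * x^k := by ring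
    have hgeom : ∑ k ∈ Finset.range K, x^k ≤ x^K / (x-1) := by
      rw [geom_sum_eq (ne_of_gt hx1) K]
      apply div_le_div_of_nonneg_right ?_ hx1'.le
      linarith
    have hxK : x^K ≤ 2 * (m:ℝ)^γ := by
      have e1 : x^K = ((2:ℝ)^(K:ℕ) : ℝ) ^ γ := by
        rw [hx, ← Real.rpow_natCast ((2:ℝ)^γ) K, ← Real.rpow_mul (by norm_num),
          ← Real.rpow_natCast (2:ℝ) K, ← Real.rpow_mul (by norm_num)]
        congr 1
        ring
      rw [e1]
      calc ((2:ℝ)^(K:ℕ)) ^ γ ≤ (2 * (m:ℝ)) ^ γ :=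
            Real.rpow_le_rpow (by positivity) h2Km hγ0.le
        _ = (2:ℝ)^γ * (m:ℝ)^γ := Real.mul_rpow (by norm_num) hmpos.le
        _ ≤ 2 * (m:ℝ)^γ := by
            apply mul_le_mul_of_nonneg_right _ (Real.rpow_nonneg hmpos.le _)
            calc (2:ℝ)^γ ≤ (2:ℝ)^(1:ℝ) :=
                Real.rpow_le_rpow_of_exponent_le (by norm_num) (by rw [hγ]; linarith)
              _ = 2 := Real.rpow_one 2
    have hmsplit : (m:ℝ)^γ * (m:ℝ)^(-(1:ℝ)/2) = (m:ℝ)^(-r) := by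
      rw [← Real.rpow_add hmpos]
      congr 1
      rw [hγ]
      ring
    calc ∑ k ∈ Finset.range K, upair M r b m k
        ≤ ∑ k ∈ Finset.range K, 96 * M * ((K:ℝ)+1) ^ b * (Real.sqrt (m:ℝ))⁻¹ * x^k :=
          Finset.sum_le_sum hterm
      _ = 96 * M * ((K:ℝ)+1) ^ b * (Real.sqrt (m:ℝ))⁻¹ * ∑ k ∈ Finset.range K, x^k := by
          rw [Finset.mul_sum]
      _ ≤ 96 * M * ((K:ℝ)+1) ^ b * (Real.sqrt (m:ℝ))⁻¹ * (x^K / (x-1)) := by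
          apply mul_le_mul_of_nonneg_left hgeom
          positivity
      _ ≤ 96 * M * ((K:ℝ)+1) ^ b * (Real.sqrt (m:ℝ))⁻¹ * ((2 * (m:ℝ)^γ) / (x-1)) := by
          apply mul_le_mul_of_nonneg_left _ (by positivity)
          apply div_le_div_of_nonneg_right hxK hx1'.le
      _ = 192 * M / (x-1) * ((K:ℝ)+1) ^ b * ((m:ℝ)^γ * (m:ℝ)^(-(1:ℝ)/2)) := by
          rw [hinv]
          ring
      _ = 192 * M / (x-1) * ((K:ℝ)+1) ^ b * (m:ℝ)^(-r) := by rw [hmsplit]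
      _ ≤ 192 * M / (x-1) * (3 ^ b * L ^ b) * (m:ℝ)^(-r) := by
          apply mul_le_mul_of_nonneg_right _ hmr.le
          apply mul_le_mul_of_nonneg_left hK1b
          positivity
      _ = 192 * M / (x-1) * (3:ℝ)^b * ((m:ℝ)^(-r) * L^b) := by ring
  -- del K bound
  have hdelK : 4 * M * del r b K ≤ 8 * M * (3:ℝ)^b * ((m:ℝ)^(-r) * L^b) := by
    have h1 : del r b K ≤ 2 * ((2:ℝ)^K) ^ (-r) * ((K:ℝ)+1) ^ b := hdel K
    have h2 : ((2:ℝ)^K) ^ (-r) ≤ (m:ℝ) ^ (-r) := base_anti hr0 hmpos hm2K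
    have h3 : del r b K ≤ 2 * (m:ℝ)^(-r) * (3^b * L^b) := by
      calc del r b K ≤ 2 * ((2:ℝ)^K) ^ (-r) * ((K:ℝ)+1) ^ b := h1
        _ ≤ 2 * (m:ℝ)^(-r) * ((K:ℝ)+1) ^ b := by
            apply mul_le_mul_of_nonneg_right _ (Real.rpow_nonneg (by positivity) _)
            linarith
        _ ≤ 2 * (m:ℝ)^(-r) * (3^b * L^b) := by
            apply mul_le_mul_of_nonneg_left hK1b
            positivity
    calc 4 * M * del r b K ≤ 4 * M * (2 * (m:ℝ)^(-r) * (3^b * L^b)) := by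
          apply mul_le_mul_of_nonneg_left h3 (by positivity)
      _ = 8 * M * (3:ℝ)^b * ((m:ℝ)^(-r) * L^b) := by ring
  -- combine
  have hu0' : uu0 M m ≤ 8 * M^2 * ((m:ℝ)^(-r) * L^b) := by
    calc uu0 M m ≤ 8 * M^2 * (m:ℝ)^(-r) := hu0
      _ = 8 * M^2 * (m:ℝ)^(-r) * 1 := by ring
      _ ≤ 8 * M^2 * (m:ℝ)^(-r) * L^b := by
          apply mul_le_mul_of_nonneg_left hLb
          positivity
      _ = 8 * M^2 * ((m:ℝ)^(-r) * L^b) := by ring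
  rw [EE, ← hK]
  calc uu0 M m + (∑ k ∈ Finset.range K, upair M r b m k) + 4 * M * del r b K
      ≤ 8 * M^2 * ((m:ℝ)^(-r) * L^b) + 192 * M / (x-1) * (3:ℝ)^b * ((m:ℝ)^(-r) * L^b)
        + 8 * M * (3:ℝ)^b * ((m:ℝ)^(-r) * L^b) := add_le_add (add_le_add hu0' hsum) hdelK
    _ = (8*M^2 + 192*M/(x-1)*(3:ℝ)^b + 8*M*(3:ℝ)^b) * (m:ℝ)^(-r) * L^b := by ring

theorem sampling_discretization_from_entropy
    {d : ℕ} (Ω : Set (EuclideanSpace ℝ (Fin d))) (hΩ : IsCompact Ω)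
    (μ : Measure Ω) [IsProbabilityMeasure μ]
    (W : Set (Ω → ℝ)) (hWcont : ∀ f ∈ W, Continuous f)
    (M : ℝ) (hM : 0 < M) (hWM : ∀ f ∈ W, ∀ x, |f x| ≤ M)
    (r b : ℝ) (hr0 : 0 < r) (hr : r < 1 / 2) (hb : 0 ≤ b)
    (hent : ∀ n : ℕ, 0 < n →
      entropyNum W n ≤ (n : ℝ) ^ (-r) * (Real.logb 2 ((n : ℝ) + 1)) ^ b) :
    ∃ C : ℝ, 0 < C ∧ ∀ m : ℕ, 0 < m →
      erL2 μ W m ≤ C * (m : ℝ) ^ (-r) * (Real.logb 2 ((m : ℝ) + 1)) ^ b := by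
  obtain ⟨C, hC, hCbd⟩ := EE_le M r b hM hr0 hr hb
  refine ⟨C, hC, ?_⟩
  intro m hm
  have hmpos : (0:ℝ) < (m:ℝ) := by exact_mod_cast hm
  have hRHS0 : 0 ≤ C * (m:ℝ) ^ (-r) * (Real.logb 2 ((m:ℝ) + 1)) ^ b := by
    have h1 : (0:ℝ) ≤ (m:ℝ) ^ (-r) := (Real.rpow_pos_of_pos hmpos _).le
    have h2 : (0:ℝ) ≤ Real.logb 2 ((m:ℝ) + 1) := Real.logb_nonneg (by norm_num) (by linarith)
    exact mul_nonneg (mul_nonneg hC.le h1) (Real.rpow_nonneg h2 b)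
  have hΩne : Nonempty Ω := by
    by_contra h
    rw [not_nonempty_iff] at h
    have h1 : (Set.univ : Set Ω) = ∅ := Set.univ_eq_empty_iff.mpr h
    have h2 := measure_univ (μ := μ)
    rw [h1, measure_empty] at h2
    exact zero_ne_one h2
  rcases Set.eq_empty_or_nonempty W with hWe | hWne
  · have hie : IsEmpty ↥W := Set.isEmpty_coe_sort.mpr hWe
    have h0 : erL2 μ W m = 0 := by
      rw [erL2]
      have hz : ∀ ξ : Fin m → Ω, (⨆ f : W,
          |(∫ x, (f : Ω → ℝ) x ^ 2 ∂μ) - (1 / (m : ℝ)) * ∑ j, (f : Ω → ℝ) (ξ j) ^ 2|) = 0 :=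
        fun ξ => Real.iSup_of_isEmpty _
      simp only [hz]
      exact ciInf_const
    rw [h0]
    exact hRHS0
  · obtain ⟨ξ, hξ⟩ := core μ W (fun f hf => (hWcont f hf).measurable) hWne M r b hM hWM
      (fun n hn => by simpa [entB] using hent n hn) m hm
    have hle : erL2 μ W m ≤ EE M r b m := by
      rw [erL2]
      have hbdd : BddBelow (Set.range (fun ξ' : Fin m → Ω => ⨆ f : W,
          |(∫ x, (f : Ω → ℝ) x ^ 2 ∂μ) - (1 / (m : ℝ)) * ∑ j, (f : Ω → ℝ) (ξ' j) ^ 2|)) := by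
        refine ⟨0, ?_⟩
        rintro y ⟨ξ', rfl⟩
        exact Real.iSup_nonneg (fun f => abs_nonneg _)
      haveI : Nonempty ↥W := hWne.to_subtype
      refine ciInf_le_of_le hbdd ξ ?_
      exact ciSup_le (fun f => hξ f f.2)
    calc erL2 μ W m ≤ EE M r b m := hle
      _ ≤ C * (m:ℝ) ^ (-r) * (Real.logb 2 ((m:ℝ) + 1)) ^ b := hCbd m hm
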